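/- Let R be a commutative Noetherian ring and let J ⊆ I be ideals of R. Then the following are equivalent: (1) there exists an integer r ≥ 0 such that J·I^r = I^{r+1}; (2) every element x ∈ I is integrally dependent on J, i.e., x satisfies an equation x^n + a₁x^{n-1} + ⋯ + aₙ = 0 with aᵢ ∈ J^i for each i. -/

import Mathlib

open Polynomial Finset Pointwise

/-- A product of elements of an ideal lies in the corresponding power of the ideal. -/
private lemma prod_mem_pow_card {R : Type*} [CommRing R] (I : Ideal R) {ι : Type*}
    (t : Finset ι) (h : ι → R) (ht : ∀ i ∈ t, h i ∈ I) :
    ∏ i ∈ t, h i ∈ I ^ t.card := by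
  classical
  induction t using Finset.cons_induction with
  | empty => simp
  | cons a t ha ih =>
    rw [Finset.prod_cons, Finset.card_cons, pow_succ, mul_comm (I ^ t.card) I]
    exact Ideal.mul_mem_mul (ht a (Finset.mem_cons_self a t))
      (ih fun i hi => ht i (Finset.mem_cons_of_mem hi))

private lemma restrict_lsmul_pow {R : Type*} [CommRing R] (M : Submodule R R) (x : R)
    (h : ∀ m ∈ M, (LinearMap.lsmul R R x) m ∈ M) (k : ℕ) (m : M) :
    ((((LinearMap.lsmul R R x).restrict h) ^ k) m : R) = x ^ k * (m : R) := by
  induction k generalizing m with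
  | zero => simp
  | succ k ih =>
    rw [pow_succ, Module.End.mul_apply, ih]
    have h1 : (((LinearMap.lsmul R R x).restrict h) m : R) = x * (m : R) := by
      simp [LinearMap.restrict_apply]
    rw [h1]; ring

private lemma aeval_restrict_lsmul {R : Type*} [CommRing R] (M : Submodule R R) (x : R)
    (h : ∀ m ∈ M, (LinearMap.lsmul R R x) m ∈ M) (q : R[X]) (m : M) :
    ((Polynomial.aeval ((LinearMap.lsmul R R x).restrict h) q m : M) : R)
      = q.eval x * (m : R) := by
  induction q using Polynomial.induction_on' with
  | add p q hp hq =>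
    rw [map_add, LinearMap.add_apply, Submodule.coe_add, hp, hq, eval_add]; ring
  | monomial k a =>
    rw [Polynomial.aeval_monomial, Module.End.mul_apply, eval_monomial]
    have h1 : ((algebraMap R (Module.End R M) a)
        ((((LinearMap.lsmul R R x).restrict h) ^ k) m) : R)
        = a * ((((LinearMap.lsmul R R x).restrict h) ^ k) m : R) := by
      rw [Module.algebraMap_end_apply]
      simp
    rw [h1, restrict_lsmul_pow]; ring

/-- For ideals `J ⊆ I` of a Noetherian commutative ring, `J` is a reduction of `I`
(`J·Iʳ = Iʳ⁺¹` for some `r`) if and only if every element of `I` is integrally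
dependent on `J`. -/
theorem reduction_iff_integral
    (R : Type*) [CommRing R] [IsNoetherianRing R]
    (I J : Ideal R) (hJI : J ≤ I) :
    (∃ r : ℕ, J * I ^ r = I ^ (r + 1)) ↔
      (∀ x ∈ I, ∃ n : ℕ, 0 < n ∧ ∃ a : ℕ → R,
        (∀ i, 1 ≤ i → i ≤ n → a i ∈ J ^ i) ∧
        x ^ n + ∑ i ∈ Finset.Icc 1 n, a i * x ^ (n - i) = 0) := by
  classical
  constructor
  · -- Reduction implies integral dependence (determinant trick).
    rintro ⟨r, hr⟩ x hx
    haveI : Module.Finite R (I ^ r : Ideal R) :=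
      Module.Finite.iff_fg.mpr (IsNoetherian.noetherian _)
    have hres : ∀ m ∈ (I ^ r : Ideal R), (LinearMap.lsmul R R x) m ∈ (I ^ r : Ideal R) := by
      intro m hm
      have h1 : x * m ∈ I ^ (r + 1) := by
        rw [pow_succ']
        exact Ideal.mul_mem_mul hx hm
      have h2 : I ^ (r + 1) ≤ I ^ r := Ideal.pow_le_pow_right (Nat.le_succ r)
      simpa using h2 h1
    set f := (LinearMap.lsmul R R x).restrict hres with hf
    have hrange : LinearMap.range f ≤ J • (⊤ : Submodule R (I ^ r : Ideal R)) := by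
      rintro _ ⟨m, rfl⟩
      rw [Submodule.mem_smul_top_iff, Ideal.smul_eq_mul, hr]
      have h1 : ((f m : (I ^ r : Ideal R)) : R) = x * (m : R) := by
        simp [hf, LinearMap.restrict_apply]
      rw [h1, pow_succ']
      exact Ideal.mul_mem_mul hx m.2
    obtain ⟨p, hmonic, -, hcoeff, heval⟩ :=
      LinearMap.exists_monic_and_coeff_mem_pow_and_aeval_eq_zero_of_range_le_smul R f J hrange
    set d := p.natDegree with hd
    have key : p.eval x * x ^ r = 0 := by
      have hxr : x ^ r ∈ (I ^ r : Ideal R) := Ideal.pow_mem_pow hx r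
      have h0 : (Polynomial.aeval f p) (⟨x ^ r, hxr⟩ : (I ^ r : Ideal R)) = 0 := by
        rw [heval]; rfl
      have h1 := aeval_restrict_lsmul (I ^ r : Ideal R) x hres p ⟨x ^ r, hxr⟩
      rw [h0] at h1
      simpa using h1.symm
    have key2 : p.eval x * x ^ (r + 1) = 0 := by
      have h1 : p.eval x * x ^ (r + 1) = p.eval x * x ^ r * x := by ring
      rw [h1, key, zero_mul]
    refine ⟨d + r + 1, Nat.succ_pos _, fun i => if i ≤ d then p.coeff (d - i) else 0, ?_, ?_⟩
    · intro i h1 h2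
      show (if i ≤ d then p.coeff (d - i) else 0) ∈ J ^ i
      by_cases hid : i ≤ d
      · rw [if_pos hid]
        have h3 := hcoeff (d - i)
        rwa [Nat.sub_sub_self hid] at h3
      · rw [if_neg hid]
        exact (J ^ i).zero_mem
    · show x ^ (d + r + 1) + ∑ i ∈ Finset.Icc 1 (d + r + 1),
          (if i ≤ d then p.coeff (d - i) else 0) * x ^ (d + r + 1 - i) = 0
      have hz : ∀ i ∈ Finset.Icc 1 (d + r + 1), i ∉ Finset.Icc 1 d →
          (if i ≤ d then p.coeff (d - i) else 0) * x ^ (d + r + 1 - i) = 0 := by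
        intro i hi hi'
        rw [Finset.mem_Icc] at hi hi'
        have hnd : ¬ i ≤ d := by omega
        rw [if_neg hnd, zero_mul]
      have e1 : ∑ i ∈ Finset.Icc 1 (d + r + 1),
          (if i ≤ d then p.coeff (d - i) else 0) * x ^ (d + r + 1 - i)
          = ∑ i ∈ Finset.Icc 1 d, p.coeff (d - i) * x ^ (d + r + 1 - i) := by
        rw [← Finset.sum_subset
          (Finset.Icc_subset_Icc le_rfl (show d ≤ d + r + 1 by omega)) hz]
        exact Finset.sum_congr rfl fun i hi => by
          rw [Finset.mem_Icc] at hi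
          rw [if_pos hi.2]
      have e2 : ∑ i ∈ Finset.Icc 1 d, p.coeff (d - i) * x ^ (d + r + 1 - i)
          = ∑ k ∈ Finset.range d, p.coeff k * x ^ (k + r + 1) := by
        refine Finset.sum_bij' (fun i _ => d - i) (fun k _ => d - k) ?_ ?_ ?_ ?_ ?_
        · intro i hi
          rw [Finset.mem_Icc] at hi
          show d - i ∈ Finset.range d
          rw [Finset.mem_range]
          omega
        · intro k hk
          rw [Finset.mem_range] at hk
          show d - k ∈ Finset.Icc 1 d
          rw [Finset.mem_Icc]
          omega
        · intro i hi
          rw [Finset.mem_Icc] at hi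
          show d - (d - i) = i
          omega
        · intro k hk
          rw [Finset.mem_range] at hk
          show d - (d - k) = k
          omega
        · intro i hi
          rw [Finset.mem_Icc] at hi
          show p.coeff (d - i) * x ^ (d + r + 1 - i)
            = p.coeff (d - i) * x ^ ((d - i) + r + 1)
          congr 2
          omega
      have e3 : x ^ (d + r + 1) + ∑ k ∈ Finset.range d, p.coeff k * x ^ (k + r + 1)
          = ∑ k ∈ Finset.range (d + 1), p.coeff k * x ^ (k + r + 1) := by
        rw [Finset.sum_range_succ]
        have h1 : p.coeff d = 1 := hmonic.coeff_natDegree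
        rw [h1]
        ring
      have e4 : ∑ k ∈ Finset.range (d + 1), p.coeff k * x ^ (k + r + 1)
          = p.eval x * x ^ (r + 1) := by
        rw [Polynomial.eval_eq_sum_range, Finset.sum_mul]
        exact Finset.sum_congr rfl fun k _ => by
          rw [show k + r + 1 = k + (r + 1) by omega, pow_add]; ring
      rw [e1, e2, e3, e4, key2]
  · -- Integral dependence implies reduction.
    intro H
    have H' : ∀ x ∈ I, ∃ n : ℕ, 0 < n ∧ x ^ n ∈ J * I ^ (n - 1) := by
      intro x hx
      obtain ⟨n, hn, a, ha, heq⟩ := H x hx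
      refine ⟨n, hn, ?_⟩
      have hx' : x ^ n = -∑ i ∈ Finset.Icc 1 n, a i * x ^ (n - i) := by
        linear_combination heq
      rw [hx']
      refine neg_mem (Ideal.sum_mem _ fun i hi => ?_)
      rw [Finset.mem_Icc] at hi
      have h1 : a i * x ^ (n - i) ∈ J ^ i * I ^ (n - i) :=
        Ideal.mul_mem_mul (ha i hi.1 hi.2) (Ideal.pow_mem_pow hx _)
      have h2 : J ^ i * I ^ (n - i) ≤ J * I ^ (n - 1) := by
        have hi1 : i = (i - 1) + 1 := by omega
        calc J ^ i * I ^ (n - i) = J ^ ((i - 1) + 1) * I ^ (n - i) := by rw [← hi1]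
          _ = J * (J ^ (i - 1) * I ^ (n - i)) := by rw [pow_succ']; ring
          _ ≤ J * (I ^ (i - 1) * I ^ (n - i)) :=
              Ideal.mul_mono le_rfl (Ideal.mul_mono (Ideal.pow_right_mono hJI _) le_rfl)
          _ = J * I ^ ((i - 1) + (n - i)) := by rw [pow_add]
          _ = J * I ^ (n - 1) := by rw [show (i - 1) + (n - i) = n - 1 by omega]
      exact h2 h1
    obtain ⟨s, hs⟩ := IsNoetherian.noetherian I
    choose! n hn hmem using H'
    set N := 1 + ∑ g ∈ s, (n g - 1) with hN
    have hsI : ∀ g : R, g ∈ (s : Set R) → g ∈ I := by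
      intro g hg; rw [← hs]; exact Ideal.subset_span hg
    refine ⟨N - 1, ?_⟩
    have hN1 : N - 1 + 1 = N := by omega
    rw [hN1]
    apply le_antisymm
    · calc J * I ^ (N - 1) ≤ I * I ^ (N - 1) := Ideal.mul_mono hJI le_rfl
        _ = I ^ (N - 1 + 1) := by rw [pow_succ']
        _ = I ^ N := by rw [hN1]
    · have hpow : I ^ N = Ideal.span ((s : Set R) ^ N) := by
        conv_lhs => rw [← hs]
        exact Submodule.span_pow _ _
      rw [hpow, Ideal.span_le]
      intro a ha
      rw [Set.mem_pow] at ha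
      obtain ⟨f, hfa⟩ := ha
      rw [List.prod_ofFn] at hfa
      have hcard : ∑ g ∈ s, (Finset.univ.filter fun i : Fin N => (f i : R) = g).card = N := by
        rw [← Finset.card_eq_sum_card_fiberwise
          (fun i _ => Finset.mem_coe.mp (f i).2)]
        simp
      have hex : ∃ g ∈ s, n g ≤ (Finset.univ.filter fun i : Fin N => (f i : R) = g).card := by
        by_contra h
        push_neg at h
        have hle : ∑ g ∈ s, (Finset.univ.filter fun i : Fin N => (f i : R) = g).card
            ≤ ∑ g ∈ s, (n g - 1) :=
          Finset.sum_le_sum fun g hg => by have := h g hg; omega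
        omega
      obtain ⟨g, hgs, hng⟩ := hex
      set t := Finset.univ.filter fun i : Fin N => (f i : R) = g with ht
      set c := t.card with hc
      have hgI : g ∈ I := hsI g hgs
      have hngpos : 0 < n g := hn g hgI
      have hcN : c ≤ N := by
        calc c ≤ (Finset.univ : Finset (Fin N)).card := Finset.card_filter_le _ _
          _ = N := by simp
      have hsplit : ∏ i, (f i : R)
          = (∏ i ∈ t, (f i : R)) *
            ∏ i ∈ Finset.univ.filter (fun i : Fin N => ¬ ((f i : R) = g)), (f i : R) :=
        (Finset.prod_filter_mul_prod_filter_not Finset.univ _ _).symm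
      have h1 : ∏ i ∈ t, (f i : R) = g ^ c := by
        rw [Finset.prod_congr rfl (fun i hi => (Finset.mem_filter.mp hi).2),
          Finset.prod_const]
      have hcard2 : (Finset.univ.filter (fun i : Fin N => ¬ ((f i : R) = g))).card = N - c := by
        have h3 := Finset.card_filter_add_card_filter_not
          (s := Finset.univ) (p := fun i : Fin N => (f i : R) = g)
        simp only [Finset.card_univ, Fintype.card_fin] at h3
        have h4 : c = (Finset.univ.filter fun i : Fin N => (f i : R) = g).card := rfl
        omega
      have h2 : ∏ i ∈ Finset.univ.filter (fun i : Fin N => ¬ ((f i : R) = g)), (f i : R)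
          ∈ I ^ (N - c) := by
        rw [← hcard2]
        exact prod_mem_pow_card I _ _ fun i _ => hsI _ (f i).2
      have h3 : g ^ c ∈ J * I ^ (c - 1) := by
        have e : g ^ c = g ^ (n g) * g ^ (c - n g) := by
          rw [← pow_add]
          congr 1
          omega
        rw [e]
        have h4 : g ^ (n g) * g ^ (c - n g) ∈ (J * I ^ (n g - 1)) * I ^ (c - n g) :=
          Ideal.mul_mem_mul (hmem g hgI) (Ideal.pow_mem_pow hgI _)
        have h5 : (J * I ^ (n g - 1)) * I ^ (c - n g) ≤ J * I ^ (c - 1) := by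
          rw [mul_assoc, ← pow_add, show (n g - 1) + (c - n g) = c - 1 by omega]
        exact h5 h4
      have h6 : (∏ i ∈ t, (f i : R)) *
          (∏ i ∈ Finset.univ.filter (fun i : Fin N => ¬ ((f i : R) = g)), (f i : R))
          ∈ (J * I ^ (c - 1)) * I ^ (N - c) := by
        rw [h1]
        exact Ideal.mul_mem_mul h3 h2
      have h7 : (J * I ^ (c - 1)) * I ^ (N - c) ≤ J * I ^ (N - 1) := by
        rw [mul_assoc, ← pow_add, show (c - 1) + (N - c) = N - 1 by omega]
      rw [← hfa, hsplit]
      exact h7 h6
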